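/- arXiv:1306.6930 — 4 statements merged into one kernel-verified Lean document; each statement's English description precedes it below -/
import Mathlib

section
/- If Ω ⊂ ℝ² is a bounded open connected domain and f : Ω → ℝ is continuous and Mostow monotone, then f is Lebesgue monotone, i.e., on every compact subset K of Ω, f attains its maximum and minimum over K on the topological boundary of K. -/
open Metric Set

private lemma frontier_componentIn_subset {K : Set (EuclideanSpace ℝ (Fin 2))} (hK : IsClosed K)
    {x : EuclideanSpace ℝ (Fin 2)} (hx : x ∈ interior K) :
    frontier (connectedComponentIn (interior K) x) ⊆ frontier K := by
  intro y hy
  set U := connectedComponentIn (interior K) x with hU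
  have hUo : IsOpen U := isOpen_interior.connectedComponentIn
  rw [hUo.frontier_eq] at hy
  have hyc : y ∈ closure U := hy.1
  have hyU : y ∉ U := hy.2
  have hyK : y ∈ K := by
    have : closure U ⊆ K := by
      calc closure U ⊆ closure (interior K) :=
            closure_mono (connectedComponentIn_subset _ _)
        _ ⊆ closure K := closure_mono interior_subset
        _ = K := hK.closure_eq
    exact this hyc
  have hyint : y ∉ interior K := by
    intro hyi
    have hVo : IsOpen (connectedComponentIn (interior K) y) :=
      isOpen_interior.connectedComponentIn
    have hyV : y ∈ connectedComponentIn (interior K) y := mem_connectedComponentIn hyi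
    obtain ⟨z, hzV, hzU⟩ := _root_.mem_closure_iff.mp hyc _ hVo hyV
    have h1 : connectedComponentIn (interior K) z = connectedComponentIn (interior K) y :=
      (connectedComponentIn_eq hzV).symm
    have h2 : connectedComponentIn (interior K) z = U := (connectedComponentIn_eq hzU).symm
    exact hyU (h2 ▸ h1 ▸ hyV)
  rw [hK.frontier_eq]
  exact ⟨hyK, hyint⟩

theorem mostow_implies_lebesgue
    (Ω : Set (EuclideanSpace ℝ (Fin 2))) (hΩo : IsOpen Ω) (hΩb : Bornology.IsBounded Ω)
    (hΩc : IsConnected Ω)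
    (f : EuclideanSpace ℝ (Fin 2) → ℝ) (hf : ContinuousOn f Ω)
    (hmono : ∀ U : Set (EuclideanSpace ℝ (Fin 2)), U ⊆ Ω → IsOpen U → IsConnected U →
      U ≠ closure U →
      sSup (f '' U) ≤ sSup (f '' frontier U) ∧ sInf (f '' frontier U) ≤ sInf (f '' U)) :
    ∀ K : Set (EuclideanSpace ℝ (Fin 2)), K ⊆ Ω → IsCompact K → K.Nonempty →
      (∃ x ∈ frontier K, ∀ y ∈ K, f y ≤ f x) ∧
      (∃ x ∈ frontier K, ∀ y ∈ K, f x ≤ f y) := by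
  intro K hKΩ hKc hKne
  have hfK : ContinuousOn f K := hf.mono hKΩ
  have hKcl : IsClosed K := hKc.isClosed
  -- common setup for a point in the interior
  have key : ∀ x₀ ∈ interior K,
      let U := connectedComponentIn (interior K) x₀
      U ⊆ Ω ∧ IsOpen U ∧ IsConnected U ∧ U ≠ closure U ∧ frontier U ⊆ frontier K ∧
        (frontier U).Nonempty ∧ IsCompact (frontier U) ∧ x₀ ∈ U := by
    intro x₀ hx₀
    set U := connectedComponentIn (interior K) x₀ with hUdef
    have hUo : IsOpen U := isOpen_interior.connectedComponentIn
    have hx₀U : x₀ ∈ U := mem_connectedComponentIn hx₀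
    have hUK : U ⊆ K := (connectedComponentIn_subset _ _).trans interior_subset
    have hUΩ : U ⊆ Ω := hUK.trans hKΩ
    have hUconn : IsConnected U := isConnected_connectedComponentIn_iff.mpr hx₀
    have hclU : closure U ⊆ K := by
      rw [← hKcl.closure_eq]; exact closure_mono hUK
    have hUne : U ≠ closure U := by
      intro h
      have hclopen : IsClopen U := ⟨h ▸ isClosed_closure, hUo⟩
      rcases isClopen_iff.mp hclopen with h0 | huniv
      · simp [h0] at hx₀U
      · have : IsCompact (univ : Set (EuclideanSpace ℝ (Fin 2))) :=
          hKc.of_isClosed_subset isClosed_univ (huniv ▸ hUK)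
        exact (not_compactSpace_iff.mpr inferInstance) (isCompact_univ_iff.mp this)
    have hfr : frontier U ⊆ frontier K := frontier_componentIn_subset hKcl hx₀
    have hfrne : (frontier U).Nonempty := by
      rw [hUo.frontier_eq]
      by_contra h
      push_neg at h
      rw [diff_eq_empty] at h
      exact hUne (subset_antisymm subset_closure h)
    have hfrc : IsCompact (frontier U) :=
      hKc.of_isClosed_subset isClosed_frontier
        ((hUo.frontier_eq ▸ Set.diff_subset).trans hclU)
    exact ⟨hUΩ, hUo, hUconn, hUne, hfr, hfrne, hfrc, hx₀U⟩
  constructor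
  · obtain ⟨x₀, hx₀K, hmax⟩ := hKc.exists_isMaxOn hKne hfK
    by_cases hfr : x₀ ∈ frontier K
    · exact ⟨x₀, hfr, fun y hy => hmax hy⟩
    · have hx₀i : x₀ ∈ interior K := by
        rcases (hKcl.frontier_eq ▸ (fun h : x₀ ∉ K \ interior K => h)) hfr with h
        · by_contra hi; exact hfr (hKcl.frontier_eq ▸ ⟨hx₀K, hi⟩)
      obtain ⟨hUΩ, hUo, hUconn, hUne, hfrsub, hfrne, hfrc, hx₀U⟩ := key x₀ hx₀i
      set U := connectedComponentIn (interior K) x₀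
      have hUK : U ⊆ K := (connectedComponentIn_subset _ _).trans interior_subset
      have hfrK : frontier U ⊆ K := hfrsub.trans frontier_subset_closure |>.trans
        (by rw [hKcl.closure_eq])
      obtain ⟨y, hyfr, hymax⟩ := hfrc.exists_isMaxOn hfrne (hfK.mono hfrK)
      refine ⟨y, hfrsub hyfr, fun z hz => ?_⟩
      have hbdd : BddAbove (f '' U) :=
        ((hKc.image_of_continuousOn hfK).bddAbove).mono (image_mono (f := f) hUK)
      have h1 : f x₀ ≤ sSup (f '' U) := le_csSup hbdd ⟨x₀, hx₀U, rfl⟩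
      have h2 : sSup (f '' frontier U) ≤ f y :=
        csSup_le (hfrne.image f) (fun a ⟨w, hw, hwa⟩ => hwa ▸ hymax hw)
      calc f z ≤ f x₀ := hmax hz
        _ ≤ sSup (f '' U) := h1
        _ ≤ sSup (f '' frontier U) := (hmono U hUΩ hUo hUconn hUne).1
        _ ≤ f y := h2
  · obtain ⟨x₀, hx₀K, hmin⟩ := hKc.exists_isMinOn hKne hfK
    by_cases hfr : x₀ ∈ frontier K
    · exact ⟨x₀, hfr, fun y hy => hmin hy⟩
    · have hx₀i : x₀ ∈ interior K := by
        by_contra hi; exact hfr (hKcl.frontier_eq ▸ ⟨hx₀K, hi⟩)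
      obtain ⟨hUΩ, hUo, hUconn, hUne, hfrsub, hfrne, hfrc, hx₀U⟩ := key x₀ hx₀i
      set U := connectedComponentIn (interior K) x₀
      have hUK : U ⊆ K := (connectedComponentIn_subset _ _).trans interior_subset
      have hfrK : frontier U ⊆ K := hfrsub.trans frontier_subset_closure |>.trans
        (by rw [hKcl.closure_eq])
      obtain ⟨y, hyfr, hymin⟩ := hfrc.exists_isMinOn hfrne (hfK.mono hfrK)
      refine ⟨y, hfrsub hyfr, fun z hz => ?_⟩
      have hbdd : BddBelow (f '' U) :=
        ((hKc.image_of_continuousOn hfK).bddBelow).mono (image_mono (f := f) hUK)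
      have h1 : sInf (f '' U) ≤ f x₀ := csInf_le hbdd ⟨x₀, hx₀U, rfl⟩
      have h2 : f y ≤ sInf (f '' frontier U) :=
        le_csInf (hfrne.image f) (fun a ⟨w, hw, hwa⟩ => hwa ▸ hymin hw)
      calc f y ≤ sInf (f '' frontier U) := h2
        _ ≤ sInf (f '' U) := (hmono U hUΩ hUo hUconn hUne).2
        _ ≤ f x₀ := h1
        _ ≤ f z := hmin hz
end

section
/- Let Ω ⊂ ℝ² be a bounded open domain and f : Ω → ℝ continuous and Lebesgue monotone. Then f is Vodopyanov–Goldstein monotone: for every x ∈ Ω and every r with 0 < r < dist(x, ∂Ω), the set B(x,r) ∩ f⁻¹( f(B(x,r)) ∩ (ℝ \ f(S(x,r))) ) has Lebesgue measure zero, where B(x,r) is the closed ball and S(x,r) its boundary sphere. -/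
open Metric Set MeasureTheory

theorem lebesgue_implies_vodopyanov_goldstein
    (Ω : Set (EuclideanSpace ℝ (Fin 2))) (hΩo : IsOpen Ω) (hΩb : Bornology.IsBounded Ω)
    (f : EuclideanSpace ℝ (Fin 2) → ℝ) (hf : ContinuousOn f Ω)
    (hLeb : ∀ K : Set (EuclideanSpace ℝ (Fin 2)), K ⊆ Ω → IsCompact K → K.Nonempty →
      (∃ x ∈ frontier K, ∀ y ∈ K, f y ≤ f x) ∧
      (∃ x ∈ frontier K, ∀ y ∈ K, f x ≤ f y)) :
    ∀ x ∈ Ω, ∀ r : ℝ, 0 < r → r < Metric.infDist x Ωᶜ →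
      volume (closedBall x r ∩
        f ⁻¹' (f '' closedBall x r ∩ (univ \ f '' sphere x r))) = 0 := by
  intro x hx r hr hrd
  have hball : closedBall x r ⊆ Ω := by
    intro z hz
    by_contra hzΩ
    have : Metric.infDist x Ωᶜ ≤ dist x z := Metric.infDist_le_dist_of_mem hzΩ
    rw [dist_comm] at this
    exact absurd (this.trans (mem_closedBall.mp hz)) (not_le.mpr hrd)
  have hfront : frontier (closedBall x r) = sphere x r := frontier_closedBall x hr.ne'
  have hsub : sphere x r ⊆ Ω := by
    rw [← hfront]
    exact (frontier_subset_closure.trans closure_closedBall.subset).trans hball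
  -- the set is empty
  have hempty : closedBall x r ∩
      f ⁻¹' (f '' closedBall x r ∩ (univ \ f '' sphere x r)) = ∅ := by
    rw [eq_empty_iff_forall_notMem]
    rintro y ⟨hyB, hy1, -, hy2⟩
    apply hy2
    obtain ⟨⟨a, ha, hamax⟩, ⟨b, hb, hbmin⟩⟩ :=
      hLeb (closedBall x r) hball (isCompact_closedBall x r) ⟨x, mem_closedBall_self hr.le⟩
    rw [hfront] at ha hb
    have hconn : IsPreconnected (sphere x r) := by
      have : (1 : Cardinal) < Module.rank ℝ (EuclideanSpace ℝ (Fin 2)) := by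
        rw [← Module.finrank_eq_rank, finrank_euclideanSpace_fin]
        norm_num
      exact (isConnected_sphere this x hr.le).isPreconnected
    have := hconn.intermediate_value hb ha (hf.mono hsub)
    apply this
    obtain ⟨z, hz, hzy⟩ := hy1
    exact ⟨hzy ▸ hbmin z hz, hzy ▸ hamax z hz⟩

  rw [hempty, measure_empty]
end

section
/- The function f(x,y) = x³ − x on ℝ² is Lebesgue monotone on any bounded open domain Ω ⊂ ℝ²: for every compact subset Ω' ⊆ Ω, f attains its maximum and minimum over Ω' at points of ∂Ω'. -/
open Set

lemma frontier_same_x (K : Set (EuclideanSpace ℝ (Fin 2))) (hK : IsCompact K)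
    (p : EuclideanSpace ℝ (Fin 2)) (hp : p ∈ K) :
    ∃ q ∈ frontier K, q 0 = p 0 := by
  set S : Set (EuclideanSpace ℝ (Fin 2)) := {q ∈ K | q 0 = p 0} with hS
  have hScpt : IsCompact S := by
    apply hK.of_isClosed_subset
    · exact hK.isClosed.inter (isClosed_eq (EuclideanSpace.proj (0 : Fin 2)).continuous continuous_const)
    · exact fun q hq => hq.1
  have hSne : S.Nonempty := ⟨p, hp, rfl⟩
  obtain ⟨q, hqS, hqmax⟩ := hScpt.exists_isMaxOn hSne
    ((EuclideanSpace.proj (1 : Fin 2)).continuous.continuousOn)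
  refine ⟨q, ?_, hqS.2⟩
  rw [frontier, hK.isClosed.closure_eq]
  refine ⟨hqS.1, fun hint => ?_⟩
  rw [mem_interior_iff_mem_nhds, Metric.mem_nhds_iff] at hint
  obtain ⟨ε, hε, hball⟩ := hint
  set q' : EuclideanSpace ℝ (Fin 2) := q + EuclideanSpace.single 1 (ε / 2) with hq'
  have hq'0 : q' 0 = q 0 := by
    simp [hq', EuclideanSpace.single_apply]
  have hq'1 : q' 1 = q 1 + ε / 2 := by
    simp [hq', EuclideanSpace.single_apply]
  have hq'S : q' ∈ S := by
    refine ⟨hball ?_, by rw [hq'0]; exact hqS.2⟩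
    rw [Metric.mem_ball, dist_eq_norm]
    have : q' - q = EuclideanSpace.single 1 (ε / 2) := by simp [hq']
    rw [this, EuclideanSpace.norm_single, Real.norm_eq_abs,
      abs_of_pos (by linarith : (0:ℝ) < ε / 2)]
    linarith
  have h2 : q' 1 ≤ q 1 := hqmax hq'S
  rw [hq'1] at h2
  linarith

theorem cubic_is_lebesgue_monotone
    (Ω : Set (EuclideanSpace ℝ (Fin 2))) (hΩo : IsOpen Ω) (hΩb : Bornology.IsBounded Ω)
    (f : EuclideanSpace ℝ (Fin 2) → ℝ) (hf : ∀ p, f p = (p 0) ^ 3 - p 0) :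
    ∀ Ω' : Set (EuclideanSpace ℝ (Fin 2)), Ω' ⊆ Ω → IsCompact Ω' → Ω'.Nonempty →
      (∃ x ∈ frontier Ω', ∀ y ∈ Ω', f y ≤ f x) ∧
      (∃ x ∈ frontier Ω', ∀ y ∈ Ω', f x ≤ f y) := by
  intro Ω' hsub hcpt hne
  have hfc : ContinuousOn f Ω' := by
    have : Continuous f := by
      have : f = fun p => (p 0) ^ 3 - p 0 := funext hf
      rw [this]
      exact ((EuclideanSpace.proj (0 : Fin 2)).continuous.pow 3).sub (EuclideanSpace.proj (0 : Fin 2)).continuous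
    exact this.continuousOn
  constructor
  · obtain ⟨p, hp, hmax⟩ := hcpt.exists_isMaxOn hne hfc
    obtain ⟨q, hqf, hq0⟩ := frontier_same_x Ω' hcpt p hp
    refine ⟨q, hqf, fun y hy => ?_⟩
    have : f q = f p := by rw [hf, hf, hq0]
    rw [this]; exact hmax hy
  · obtain ⟨p, hp, hmin⟩ := hcpt.exists_isMinOn hne hfc
    obtain ⟨q, hqf, hq0⟩ := frontier_same_x Ω' hcpt p hp
    refine ⟨q, hqf, fun y hy => ?_⟩
    have : f q = f p := by rw [hf, hf, hq0]
    rw [this]; exact hmin hy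
end

section
/- Let Ω ⊂ ℝ² be a bounded open domain and f : Ω → ℝ continuous and normal monotone. Then f is Lebesgue monotone: on every compact subset Ω' ⊆ Ω, f attains its maximum and minimum over Ω' on ∂Ω'. -/
open Set Filter Topology RealInnerProductSpace

/-- `v` is a tangent vector to the set `X` at the point `x`. -/
def IsTangentVec (X : Set (EuclideanSpace ℝ (Fin 2))) (x v : EuclideanSpace ℝ (Fin 2)) :
    Prop :=
  ∃ (xk : ℕ → EuclideanSpace ℝ (Fin 2)) (tk : ℕ → ℝ),
    (∀ k, xk k ∈ X) ∧ Tendsto xk atTop (𝓝 x) ∧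
    (∀ k, 0 < tk k) ∧ Tendsto tk atTop (𝓝 0) ∧
    Tendsto (fun k => (tk k)⁻¹ • (xk k - x)) atTop (𝓝 v)

/-- `nv` is a normal vector to the set `X` at `x`. -/
def IsNormalVec (X : Set (EuclideanSpace ℝ (Fin 2))) (x nv : EuclideanSpace ℝ (Fin 2)) :
    Prop :=
  ∀ v, IsTangentVec X x v → ⟪nv, v⟫ ≤ 0

lemma aux_max
    (Ω : Set (EuclideanSpace ℝ (Fin 2)))
    (f : EuclideanSpace ℝ (Fin 2) → ℝ) (hf : ContinuousOn f Ω)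
    (hNM : ∀ c : ℝ, ∀ x ∈ Ω ∩ frontier {y ∈ Ω | f y = c}, f x = c →
      ∀ nv, IsNormalVec {y ∈ Ω | f y = c} x nv →
        MonotoneOn (fun γ : ℝ => f (x + γ • nv)) {γ : ℝ | x + γ • nv ∈ Ω} ∨
        AntitoneOn (fun γ : ℝ => f (x + γ • nv)) {γ : ℝ | x + γ • nv ∈ Ω})
    (Ω' : Set (EuclideanSpace ℝ (Fin 2))) (hsub : Ω' ⊆ Ω) (hcpt : IsCompact Ω')
    (hne : Ω'.Nonempty) :
    ∃ x ∈ frontier Ω', ∀ y ∈ Ω', f y ≤ f x := by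
  by_contra hcon
  push_neg at hcon
  have hΩ'closed : IsClosed Ω' := hcpt.isClosed
  obtain ⟨x₀, hx₀Ω', hx₀max⟩ := hcpt.exists_isMaxOn hne (hf.mono hsub)
  set M := f x₀ with hM
  have hx₀max' : ∀ y ∈ Ω', f y ≤ M := fun y hy => hx₀max hy
  have hfr_lt : ∀ x ∈ frontier Ω', f x < M := by
    intro x hx
    obtain ⟨y, hy, hxy⟩ := hcon x hx
    exact lt_of_lt_of_le hxy (hx₀max' y hy)
  have hNM' := hNM M
  set L := {y ∈ Ω | f y = M} with hLdef
  set K := {y ∈ Ω' | f y = M} with hKdef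
  have hKL : K ⊆ L := fun y hy => ⟨hsub hy.1, hy.2⟩
  have hKcl : IsClosed K :=
    (hf.mono hsub).preimage_isClosed_of_isClosed hΩ'closed isClosed_singleton
  have hKcpt : IsCompact K := hcpt.of_isClosed_subset hKcl (fun y hy => hy.1)
  have hKint : K ⊆ interior Ω' := by
    intro y hy
    by_contra h
    have hyfr : y ∈ frontier Ω' := hΩ'closed.frontier_eq ▸ ⟨hy.1, h⟩
    exact absurd hy.2 (hfr_lt y hyfr).ne
  have hKne : K.Nonempty := ⟨x₀, hx₀Ω', rfl⟩
  obtain ⟨δ, hδ, hthick⟩ := hKcpt.exists_thickening_subset_open isOpen_interior hKint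
  -- find z near K not in L
  have hz : ∃ z ∈ Metric.thickening (δ/2) K, z ∉ L := by
    by_contra h
    push_neg at h
    have hsubK : Metric.thickening (δ/2) K ⊆ K := by
      intro z hzth
      have hzint : z ∈ interior Ω' :=
        hthick (Metric.thickening_mono (by linarith) K hzth)
      exact ⟨interior_subset hzint, (h z hzth).2⟩
    have hKopen : IsOpen K := by
      rw [Metric.isOpen_iff]
      intro y hy
      refine ⟨δ/2, by positivity, fun w hw => hsubK ?_⟩
      exact Metric.mem_thickening_iff.mpr ⟨y, hy, hw⟩
    have : K = univ := IsClopen.eq_univ ⟨hKcl, hKopen⟩ hKne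
    rw [this] at hKcpt
    exact noncompact_univ (EuclideanSpace ℝ (Fin 2)) hKcpt
  obtain ⟨z, hzth, hzL⟩ := hz
  have hzint : z ∈ interior Ω' := hthick (Metric.thickening_mono (by linarith) K hzth)
  obtain ⟨x₁, hx₁K, hx₁d⟩ := Metric.mem_thickening_iff.mp hzth
  -- the set S of candidate closest points
  have hSK : L ∩ Metric.closedBall z (δ/2) ⊆ K := by
    rintro y ⟨hyL, hyb⟩
    have hyth : y ∈ Metric.thickening δ K := by
      refine Metric.mem_thickening_iff.mpr ⟨x₁, hx₁K, ?_⟩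
      have h1 : dist y z ≤ δ/2 := Metric.mem_closedBall.mp hyb
      calc dist y x₁ ≤ dist y z + dist z x₁ := dist_triangle _ _ _
        _ < δ := by linarith
    exact ⟨interior_subset (hthick hyth), hyL.2⟩
  have hScpt : IsCompact (L ∩ Metric.closedBall z (δ/2)) := by
    have heq : L ∩ Metric.closedBall z (δ/2) = K ∩ Metric.closedBall z (δ/2) :=
      subset_antisymm (fun y hy => ⟨hSK hy, hy.2⟩) (fun y hy => ⟨hKL hy.1, hy.2⟩)
    rw [heq]
    exact hKcpt.inter_right Metric.isClosed_closedBall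
  have hSne : (L ∩ Metric.closedBall z (δ/2)).Nonempty :=
    ⟨x₁, hKL hx₁K, Metric.mem_closedBall.mpr (by rw [dist_comm]; linarith)⟩
  obtain ⟨x, hxS, hxmin⟩ :=
    hScpt.exists_isMinOn hSne ((continuous_id.dist continuous_const).continuousOn)
  have hxL : x ∈ L := hxS.1
  have hxz : x ≠ z := fun h => hzL (h ▸ hxL)
  have hr : 0 < dist x z := dist_pos.mpr hxz
  have hLdist : ∀ y ∈ L, dist x z ≤ dist y z := by
    intro y hy
    by_cases hyb : dist y z ≤ δ/2
    · exact hxmin ⟨hy, Metric.mem_closedBall.mpr hyb⟩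
    · have h1 : dist x z ≤ dist x₁ z :=
        hxmin ⟨hKL hx₁K, Metric.mem_closedBall.mpr (by rw [dist_comm]; linarith)⟩
      have h2 : dist x₁ z < δ/2 := by rw [dist_comm]; linarith
      linarith
  set nv := z - x with hnvdef
  have hnormal : IsNormalVec L x nv := by
    rintro v ⟨xk, tk, hmem, hxk, htk, htk0, hlim⟩
    have key : ∀ k, 0 ≤ 2 * ⟪x - z, (tk k)⁻¹ • (xk k - x)⟫ +
        tk k * ‖(tk k)⁻¹ • (xk k - x)‖^2 := by
      intro k
      have h1 : dist x z ≤ dist (xk k) z := hLdist _ (hmem k)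
      have h2 : ‖x - z‖ ≤ ‖xk k - z‖ := by
        rwa [dist_eq_norm, dist_eq_norm] at h1
      have h3 : ‖x - z‖^2 ≤ ‖xk k - z‖^2 :=
        pow_le_pow_left₀ (norm_nonneg _) h2 2
      have hdecomp : xk k - z = (x - z) + tk k • ((tk k)⁻¹ • (xk k - x)) := by
        rw [smul_smul, mul_inv_cancel₀ (htk k).ne', one_smul]
        abel
      rw [hdecomp, norm_add_sq_real] at h3
      have hsm : ‖tk k • ((tk k)⁻¹ • (xk k - x))‖^2
          = tk k ^ 2 * ‖(tk k)⁻¹ • (xk k - x)‖^2 := by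
        rw [norm_smul, Real.norm_eq_abs, abs_of_pos (htk k), mul_pow]
      have hin : ⟪x - z, tk k • ((tk k)⁻¹ • (xk k - x))⟫
          = tk k * ⟪x - z, (tk k)⁻¹ • (xk k - x)⟫ := real_inner_smul_right _ _ _
      rw [hsm, hin] at h3
      nlinarith [htk k, sq_nonneg (tk k), norm_nonneg ((tk k)⁻¹ • (xk k - x))]
    have hlim2 : Tendsto (fun k => 2 * ⟪x - z, (tk k)⁻¹ • (xk k - x)⟫ +
        tk k * ‖(tk k)⁻¹ • (xk k - x)‖^2) atTop (𝓝 (2 * ⟪x - z, v⟫ + 0 * ‖v‖^2)) := by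
      exact (tendsto_const_nhds.mul (tendsto_const_nhds.inner hlim)).add
        (htk0.mul ((hlim.norm).pow 2))
    have hge : 0 ≤ 2 * ⟪x - z, v⟫ + 0 * ‖v‖^2 := ge_of_tendsto' hlim2 key
    have : ⟪nv, v⟫ = - ⟪x - z, v⟫ := by
      rw [hnvdef, ← neg_sub x z, inner_neg_left]
    rw [this]
    linarith
  have hxint : x ∈ interior Ω' :=
    hKint (hSK ⟨hxS.1, hxS.2⟩)
  have hxΩ : x ∈ Ω := hsub (interior_subset hxint)
  have hxfr : x ∈ frontier L := by
    rw [frontier_eq_closure_inter_closure]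
    refine ⟨subset_closure hxL, ?_⟩
    rw [mem_closure_iff]
    intro o ho hxo
    rw [Metric.isOpen_iff] at ho
    obtain ⟨ε, hε, hball⟩ := ho x hxo
    set t := min (1/2 : ℝ) (ε / (2 * dist x z)) with htdef
    have ht0 : 0 < t := lt_min (by norm_num) (by positivity)
    have ht1 : t ≤ 1/2 := min_le_left _ _
    have htε : t ≤ ε / (2 * dist x z) := min_le_right _ _
    refine ⟨x + t • nv, hball ?_, ?_⟩
    · rw [Metric.mem_ball, dist_eq_norm, add_sub_cancel_left, norm_smul,
        Real.norm_eq_abs, abs_of_pos ht0]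
      have hnvnorm : ‖nv‖ = dist x z := by
        rw [hnvdef, ← dist_eq_norm, dist_comm]
      rw [hnvnorm]
      have h5 : t * dist x z ≤ (ε / (2 * dist x z)) * dist x z :=
        mul_le_mul_of_nonneg_right htε dist_nonneg
      have h6 : (ε / (2 * dist x z)) * dist x z = ε / 2 := by
        field_simp
      linarith
    · intro hmem
      have hd : dist x z ≤ dist (x + t • nv) z := hLdist _ hmem
      have heq : x + t • nv - z = (1 - t) • (x - z) := by
        rw [hnvdef]
        module
      have : dist (x + t • nv) z = (1 - t) * dist x z := by
        rw [dist_eq_norm, heq, norm_smul, Real.norm_eq_abs,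
          abs_of_pos (by linarith : (0:ℝ) < 1 - t), ← dist_eq_norm]
      rw [this] at hd
      nlinarith
  have hfxM : f x = M := hxL.2
  have hzΩ' : z ∈ Ω' := interior_subset hzint
  have hzΩ : z ∈ Ω := hsub hzΩ'
  have hfz : f z < M := by
    have h1 : f z ≤ M := hx₀max' z hzΩ'
    have h2 : f z ≠ M := fun h => hzL ⟨hzΩ, h⟩
    exact lt_of_le_of_ne h1 h2
  have hx1 : x + (1:ℝ) • nv = z := by rw [one_smul, hnvdef]; abel
  have hx0 : x + (0:ℝ) • nv = x := by rw [zero_smul, add_zero]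
  rcases hNM' x ⟨hxΩ, hxfr⟩ hfxM nv hnormal with hmono | hanti
  · have h0 : (0:ℝ) ∈ {γ : ℝ | x + γ • nv ∈ Ω} := by rw [mem_setOf_eq, hx0]; exact hxΩ
    have h1 : (1:ℝ) ∈ {γ : ℝ | x + γ • nv ∈ Ω} := by rw [mem_setOf_eq, hx1]; exact hzΩ
    have := hmono h0 h1 zero_le_one
    simp only [hx0, hx1] at this
    rw [hfxM] at this
    linarith
  · -- backward ray exit point
    have hnv0 : nv ≠ 0 := by
      rw [hnvdef, sub_ne_zero]
      exact fun h => hxz h.symm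
    have hc : Continuous (fun t : ℝ => x + (-t) • nv) :=
      continuous_const.add ((continuous_neg).smul continuous_const)
    set A := {t : ℝ | 0 ≤ t ∧ x + (-t) • nv ∉ interior Ω'} with hAdef
    have hAne : A.Nonempty := by
      obtain ⟨R, hR⟩ := hcpt.isBounded.subset_closedBall x
      refine ⟨(|R| + 1) / ‖nv‖, div_nonneg (by positivity) (norm_nonneg _), ?_⟩
      intro hmem
      have h1 : x + (-(( |R| + 1) / ‖nv‖)) • nv ∈ Metric.closedBall x R :=
        hR (interior_subset hmem)
      have hnvpos : (0:ℝ) < ‖nv‖ := norm_pos_iff.mpr hnv0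
      rw [Metric.mem_closedBall, dist_eq_norm, add_sub_cancel_left, norm_smul,
        Real.norm_eq_abs, abs_neg,
        abs_of_pos (by positivity : (0:ℝ) < (|R| + 1) / ‖nv‖),
        div_mul_cancel₀ _ hnvpos.ne'] at h1
      have : R ≤ |R| := le_abs_self R
      linarith
    have hAbdd : BddBelow A := ⟨0, fun t ht => ht.1⟩
    have hAcl : IsClosed A := by
      have : A = Ici (0:ℝ) ∩ (fun t : ℝ => x + (-t) • nv) ⁻¹' (interior Ω')ᶜ := rfl
      rw [this]
      exact isClosed_Ici.inter (isOpen_interior.isClosed_compl.preimage hc)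
    set T := sInf A with hTdef
    have hTA : T ∈ A := hAcl.csInf_mem hAne hAbdd
    have hTpos : 0 < T := by
      have hopen : IsOpen ((fun t : ℝ => x + (-t) • nv) ⁻¹' interior Ω') :=
        isOpen_interior.preimage hc
      have h0mem : (0:ℝ) ∈ (fun t : ℝ => x + (-t) • nv) ⁻¹' interior Ω' := by
        simp only [mem_preimage, neg_zero, zero_smul, add_zero]
        exact hxint
      rw [Metric.isOpen_iff] at hopen
      obtain ⟨ε, hε, hball⟩ := hopen 0 h0mem
      have : ε/2 ≤ T := by
        refine le_csInf hAne ?_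
        intro t ht
        by_contra hlt
        push_neg at hlt
        have : t ∈ Metric.ball (0:ℝ) ε := by
          rw [Metric.mem_ball, Real.dist_eq, sub_zero, abs_of_nonneg ht.1]
          linarith
        exact ht.2 (hball this)
      linarith
    have hbefore : ∀ s, 0 ≤ s → s < T → x + (-s) • nv ∈ interior Ω' := by
      intro s hs0 hsT
      by_contra h
      exact absurd (csInf_le hAbdd ⟨hs0, h⟩) (not_le.mpr hsT)
    set p := x + (-T) • nv with hpdef
    have hpΩ' : p ∈ Ω' := by
      have htend : Tendsto (fun s : ℝ => x + (-s) • nv) (𝓝[<] T) (𝓝 p) :=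
        (hc.tendsto T).mono_left nhdsWithin_le_nhds
      have hev : ∀ᶠ s in 𝓝[<] T, x + (-s) • nv ∈ Ω' := by
        filter_upwards [Ioo_mem_nhdsLT_of_mem (⟨hTpos, le_refl T⟩ : T ∈ Ioc 0 T)]
          with s hs
        exact interior_subset (hbefore s (le_of_lt hs.1) hs.2)
      exact hΩ'closed.closure_subset
        (mem_closure_of_tendsto htend hev)
    have hpfr : p ∈ frontier Ω' := hΩ'closed.frontier_eq ▸ ⟨hpΩ', hTA.2⟩
    have hpΩ : p ∈ Ω := hsub hpΩ'
    have hfp : f p < M := hfr_lt p hpfr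
    have hT0 : (-T : ℝ) ∈ {γ : ℝ | x + γ • nv ∈ Ω} := hpΩ
    have h0 : (0:ℝ) ∈ {γ : ℝ | x + γ • nv ∈ Ω} := by rw [mem_setOf_eq, hx0]; exact hxΩ
    have := hanti hT0 h0 (by linarith : (-T:ℝ) ≤ 0)
    simp only [hx0] at this
    rw [hfxM] at this
    exact absurd (lt_of_le_of_lt this hfp) (lt_irrefl M)


theorem normal_monotone_implies_lebesgue
    (Ω : Set (EuclideanSpace ℝ (Fin 2))) (hΩo : IsOpen Ω) (hΩb : Bornology.IsBounded Ω)
    (f : EuclideanSpace ℝ (Fin 2) → ℝ) (hf : ContinuousOn f Ω)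
    (hNM : ∀ c : ℝ, ∀ x ∈ Ω ∩ frontier {y ∈ Ω | f y = c}, f x = c →
      ∀ nv, IsNormalVec {y ∈ Ω | f y = c} x nv →
        MonotoneOn (fun γ : ℝ => f (x + γ • nv)) {γ : ℝ | x + γ • nv ∈ Ω} ∨
        AntitoneOn (fun γ : ℝ => f (x + γ • nv)) {γ : ℝ | x + γ • nv ∈ Ω}) :
    ∀ Ω' : Set (EuclideanSpace ℝ (Fin 2)), Ω' ⊆ Ω → IsCompact Ω' → Ω'.Nonempty →
      (∃ x ∈ frontier Ω', ∀ y ∈ Ω', f y ≤ f x) ∧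
      (∃ x ∈ frontier Ω', ∀ y ∈ Ω', f x ≤ f y) := by
  intro Ω' hsub hcpt hne
  constructor
  · exact aux_max Ω f hf hNM Ω' hsub hcpt hne
  · have hfneg : ContinuousOn (fun y => -f y) Ω := hf.neg
    have hNM' : ∀ c : ℝ, ∀ x ∈ Ω ∩ frontier {y ∈ Ω | (fun y => -f y) y = c},
        (fun y => -f y) x = c →
        ∀ nv, IsNormalVec {y ∈ Ω | (fun y => -f y) y = c} x nv →
          MonotoneOn (fun γ : ℝ => (fun y => -f y) (x + γ • nv)) {γ : ℝ | x + γ • nv ∈ Ω} ∨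
          AntitoneOn (fun γ : ℝ => (fun y => -f y) (x + γ • nv)) {γ : ℝ | x + γ • nv ∈ Ω} := by
      intro c x hx hfx nv hnv
      have hset : {y ∈ Ω | (fun y => -f y) y = c} = {y ∈ Ω | f y = -c} := by
        ext y
        simp only [mem_setOf_eq, and_congr_right_iff]
        intro _
        constructor
        · intro h; rw [← h]; ring
        · intro h; rw [h]; ring
      rw [hset] at hx hnv
      have hfx' : f x = -c := by
        simp only at hfx
        linarith [hfx]
      rcases hNM (-c) x hx hfx' nv hnv with h | h
      · right
        intro a ha b hb hab
        simp only
        exact neg_le_neg (h ha hb hab)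
      · left
        intro a ha b hb hab
        simp only
        exact neg_le_neg (h ha hb hab)
    obtain ⟨x, hxfr, hxmax⟩ := aux_max Ω (fun y => -f y) hfneg hNM' Ω' hsub hcpt hne
    refine ⟨x, hxfr, fun y hy => ?_⟩
    have := hxmax y hy
    linarith
end
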